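/- Let d_1, …, d_k be integers ≥ 2, let X be a set, h : X → ℝ, and g_1, …, g_k self-maps of X with |h(g_j(x))/d_j − h(x)| ≤ c for all j, x. Let W = {1,…,k}^ℕ with product measure μ = ∏ν, where ν({j}) = d_j/(d_1+⋯+d_k). For w ∈ W let ĥ_w(x) := lim_n h(g_{w_n}∘⋯∘g_{w_1}(x))/(d_{w_1}⋯d_{w_n}). Then the function ĥ'(x) := ∫_W ĥ_w(x) dμ(w) satisfies the functional equation ∑_{j=1}^k ĥ'(g_j(x)) = (d_1+⋯+d_k) ĥ'(x) for all x ∈ X, and |ĥ'(x) − h(x)| ≤ 2c. -/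

import Mathlib

open Filter Finset MeasureTheory

/-- `orbitW g w n x = g (w (n-1)) (⋯ (g (w 0) x))`: the random orbit along the word `w`,
applying `g (w 0)` first. -/
def orbitW {X : Type*} {k : ℕ} (g : Fin k → X → X) (w : ℕ → Fin k) : ℕ → X → X
  | 0 => fun x => x
  | n + 1 => fun x => g (w n) (orbitW g w n x)

theorem orbitW_congr {X : Type*} {k : ℕ} (g : Fin k → X → X) {w w' : ℕ → Fin k} (n : ℕ)
    (hw : ∀ i < n, w i = w' i) (x : X) : orbitW g w n x = orbitW g w' n x := by
  induction n with
  | zero => rfl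
  | succ n ih =>
    simp only [orbitW]
    rw [hw n (Nat.lt_succ_self n), ih (fun i hi => hw i (hi.trans (Nat.lt_succ_self n)))]

theorem orbitW_succ_left {X : Type*} {k : ℕ} (g : Fin k → X → X) (w : ℕ → Fin k) (n : ℕ) (x : X) :
    orbitW g w (n+1) x = orbitW g (fun i => w (i+1)) n (g (w 0) x) := by
  induction n with
  | zero => rfl
  | succ n ih =>
    show g (w (n+1)) (orbitW g w (n+1) x) = _
    rw [ih]; rfl

def extW {k : ℕ} (hk : 0 < k) (n : ℕ) (s : Fin n → Fin k) : ℕ → Fin k :=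
  fun i => if hi : i < n then s ⟨i, hi⟩ else ⟨0, hk⟩

theorem approx_bound {X : Type*} {k : ℕ} (d : Fin k → ℕ) (hd : ∀ j, 2 ≤ d j)
    (h : X → ℝ) (g : Fin k → X → X) (c : ℝ) (hc : 0 ≤ c)
    (hb : ∀ j x, |h (g j x) / (d j : ℝ) - h x| ≤ c)
    (w : ℕ → Fin k) (x : X) (n : ℕ) :
    |h (orbitW g w n x) / (∏ i ∈ Finset.range n, (d (w i) : ℝ)) - h x| ≤ 2 * c := by
  have hP : ∀ m : ℕ, (2:ℝ)^m ≤ ∏ i ∈ Finset.range m, (d (w i) : ℝ) := by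
    intro m
    calc (2:ℝ)^m = ∏ _i ∈ Finset.range m, (2:ℝ) := by
          rw [Finset.prod_const, Finset.card_range]
      _ ≤ ∏ i ∈ Finset.range m, (d (w i) : ℝ) :=
          Finset.prod_le_prod (fun _ _ => by norm_num) (fun i _ => by exact_mod_cast hd (w i))
  have hPpos : ∀ m : ℕ, (0:ℝ) < ∏ i ∈ Finset.range m, (d (w i) : ℝ) :=
    fun m => lt_of_lt_of_le (by positivity) (hP m)
  have main : ∀ m : ℕ,
      |h (orbitW g w m x) / (∏ i ∈ Finset.range m, (d (w i) : ℝ)) - h x|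
        ≤ 2 * c - 2 * c / 2 ^ m := by
    intro m
    induction m with
    | zero => simp [orbitW]
    | succ m ih =>
      have hstep : |h (orbitW g w (m+1) x) / (∏ i ∈ Finset.range (m+1), (d (w i) : ℝ))
          - h (orbitW g w m x) / (∏ i ∈ Finset.range m, (d (w i) : ℝ))| ≤ c / 2 ^ m := by
        rw [Finset.prod_range_succ]
        have hPm := hPpos m
        have : h (orbitW g w (m+1) x) / ((∏ i ∈ Finset.range m, (d (w i) : ℝ)) * (d (w m) : ℝ))
            - h (orbitW g w m x) / (∏ i ∈ Finset.range m, (d (w i) : ℝ))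
            = (h (g (w m) (orbitW g w m x)) / (d (w m) : ℝ) - h (orbitW g w m x))
              / (∏ i ∈ Finset.range m, (d (w i) : ℝ)) := by
          show h (orbitW g w (m+1) x) / _ - _ = _
          have h1 : orbitW g w (m+1) x = g (w m) (orbitW g w m x) := rfl
          have h2 : ((d (w m) : ℝ)) ≠ 0 := by
            have := hd (w m); positivity
          have h3 : (∏ i ∈ Finset.range m, (d (w i) : ℝ)) ≠ 0 := hPm.ne'
          rw [h1]
          field_simp
        rw [this, abs_div, abs_of_pos hPm]
        exact div_le_div₀ hc (hb (w m) (orbitW g w m x)) (by positivity) (hP m)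
      calc |h (orbitW g w (m+1) x) / (∏ i ∈ Finset.range (m+1), (d (w i) : ℝ)) - h x|
          ≤ |h (orbitW g w (m+1) x) / (∏ i ∈ Finset.range (m+1), (d (w i) : ℝ))
              - h (orbitW g w m x) / (∏ i ∈ Finset.range m, (d (w i) : ℝ))|
            + |h (orbitW g w m x) / (∏ i ∈ Finset.range m, (d (w i) : ℝ)) - h x| := by
            exact abs_sub_le _ _ _
        _ ≤ c / 2 ^ m + (2 * c - 2 * c / 2 ^ m) := add_le_add hstep ih
        _ = 2 * c - 2 * c / 2 ^ (m+1) := by ring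
  calc |h (orbitW g w n x) / (∏ i ∈ Finset.range n, (d (w i) : ℝ)) - h x|
      ≤ 2 * c - 2 * c / 2 ^ n := main n
    _ ≤ 2 * c := by
        have : 0 ≤ 2 * c / 2 ^ n := by positivity
        linarith

theorem stmt9 {X : Type*} (k : ℕ) (d : Fin k → ℕ) (hd : ∀ j, 2 ≤ d j)
    (h : X → ℝ) (g : Fin k → X → X) (c : ℝ) (hc : 0 ≤ c)
    (hb : ∀ j x, |h (g j x) / (d j : ℝ) - h x| ≤ c)
    (μ : Measure (ℕ → Fin k))
    -- μ is the product of the measures ν with ν {j} = d j / (d 1 + ⋯ + d k),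
    -- characterized by its values on cylinder sets:
    (hμ : ∀ (n : ℕ) (s : Fin n → Fin k),
      μ {w | ∀ i : Fin n, w i = s i}
        = ∏ i : Fin n, ((d (s i) : ENNReal) / (∑ j : Fin k, (d j : ENNReal))))
    (H : (ℕ → Fin k) → X → ℝ)
    (hH : ∀ w x, Tendsto
      (fun n => h (orbitW g w n x) / (∏ i ∈ Finset.range n, (d (w i) : ℝ)))
      atTop (nhds (H w x))) :
    ∀ x : X,
      (∑ j : Fin k, (∫ w, H w (g j x) ∂μ))
        = (∑ j : Fin k, (d j : ℝ)) * ∫ w, H w x ∂μ ∧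
      |(∫ w, H w x ∂μ) - h x| ≤ 2 * c := by
  have hone : μ Set.univ = 1 := by
    have := hμ 0 (fun i => i.elim0)
    simpa using this
  rcases Nat.eq_zero_or_pos k with hk | hk
  · exfalso
    subst hk
    have he : (Set.univ : Set (ℕ → Fin 0)) = ∅ := by
      ext w; exact (w 0).elim0
    rw [he, measure_empty] at hone
    exact one_ne_zero hone.symm
  haveI : IsProbabilityMeasure μ := ⟨hone⟩
  set D : ℝ := ∑ j : Fin k, (d j : ℝ) with hDdef
  have hDpos : 0 < D := by
    apply Finset.sum_pos (fun j _ => by have := hd j; positivity)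
    exact Finset.univ_nonempty_iff.2 ⟨⟨0, hk⟩⟩
  have cyl_meas : ∀ (n : ℕ) (s : Fin n → Fin k),
      MeasurableSet {w : ℕ → Fin k | ∀ i : Fin n, w i = s i} := by
    intro n s
    have : {w : ℕ → Fin k | ∀ i : Fin n, w i = s i}
        = ⋂ i : Fin n, (fun w : ℕ → Fin k => w (i : ℕ)) ⁻¹' {s i} := by
      ext w; simp [Set.mem_iInter]
    rw [this]
    exact MeasurableSet.iInter fun i => (measurable_pi_apply _) (MeasurableSet.singleton _)
  have cyl_toReal : ∀ (n : ℕ) (s : Fin n → Fin k),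
      (μ {w : ℕ → Fin k | ∀ i : Fin n, w i = s i}).toReal
        = (∏ i : Fin n, (d (s i) : ℝ)) / D ^ n := by
    intro n s
    rw [hμ n s, ENNReal.toReal_prod]
    have hterm : ∀ i : Fin n,
        ((d (s i) : ENNReal) / (∑ j : Fin k, (d j : ENNReal))).toReal
          = (d (s i) : ℝ) / D := by
      intro i
      rw [ENNReal.toReal_div, ENNReal.toReal_natCast]
      congr 1
      rw [ENNReal.toReal_sum (fun j _ => ENNReal.natCast_ne_top _)]
      simp [hDdef]
    rw [Finset.prod_congr rfl (fun i _ => hterm i), Finset.prod_div_distrib,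
      Finset.prod_const, Finset.card_univ, Fintype.card_fin]
  -- integral of a function of finitely many coordinates
  have repr0 : ∀ (n : ℕ) (F : (Fin n → Fin k) → ℝ) (w : ℕ → Fin k),
      F (fun i : Fin n => w i)
        = ∑ s : Fin n → Fin k,
            Set.indicator {w : ℕ → Fin k | ∀ i : Fin n, w i = s i} (fun _ => F s) w := by
    intro n F w
    rw [Finset.sum_eq_single (fun i : Fin n => w i)]
    · rw [Set.indicator_of_mem]
      exact fun i => rfl
    · intro s _ hs
      apply Set.indicator_of_notMem
      intro hw
      exact hs (funext fun i => (hw i).symm)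
    · intro habs; exact absurd (Finset.mem_univ _) habs
  have hint : ∀ (n : ℕ) (F : (Fin n → Fin k) → ℝ),
      ∫ w, F (fun i : Fin n => w i) ∂μ
        = ∑ s : Fin n → Fin k,
            F s * (μ {w : ℕ → Fin k | ∀ i : Fin n, w i = s i}).toReal := by
    intro n F
    calc ∫ w, F (fun i : Fin n => w i) ∂μ
        = ∫ w, (∑ s : Fin n → Fin k,
            Set.indicator {w : ℕ → Fin k | ∀ i : Fin n, w i = s i} (fun _ => F s) w) ∂μ := by
          congr 1; funext w; exact repr0 n F w
      _ = ∑ s : Fin n → Fin k, ∫ w,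
            Set.indicator {w : ℕ → Fin k | ∀ i : Fin n, w i = s i} (fun _ => F s) w ∂μ :=
          integral_finset_sum _ (fun s _ => (integrable_const (F s)).indicator (cyl_meas n s))
      _ = ∑ s : Fin n → Fin k,
            F s * (μ {w : ℕ → Fin k | ∀ i : Fin n, w i = s i}).toReal := by
          refine Finset.sum_congr rfl fun s _ => ?_
          rw [integral_indicator_const _ (cyl_meas n s), smul_eq_mul, mul_comm, measureReal_def]
  have f_eq : ∀ (n : ℕ) (x : X) (w : ℕ → Fin k),
      h (orbitW g w n x) / (∏ i ∈ Finset.range n, (d (w i) : ℝ))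
        = (fun s : Fin n → Fin k =>
            h (orbitW g (extW hk n s) n x) / ∏ i : Fin n, (d (s i) : ℝ))
          (fun i : Fin n => w i) := by
    intro n x w
    simp only
    congr 1
    · congr 1
      apply orbitW_congr
      intro i hi
      simp [extW, hi]
    · exact (Fin.prod_univ_eq_prod_range (fun i => (d (w i) : ℝ)) n).symm
  have I_eq : ∀ (n : ℕ) (x : X),
      (∫ w, h (orbitW g w n x) / (∏ i ∈ Finset.range n, (d (w i) : ℝ)) ∂μ)
        = (∑ s : Fin n → Fin k, h (orbitW g (extW hk n s) n x)) / D ^ n := by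
    intro n x
    have e1 : (∫ w, h (orbitW g w n x) / (∏ i ∈ Finset.range n, (d (w i) : ℝ)) ∂μ)
        = ∫ w, (fun s : Fin n → Fin k =>
            h (orbitW g (extW hk n s) n x) / ∏ i : Fin n, (d (s i) : ℝ))
          (fun i : Fin n => w i) ∂μ := by
      congr 1; funext w; exact f_eq n x w
    rw [e1, hint n (fun s : Fin n → Fin k => h (orbitW g (extW hk n s) n x) / ∏ i : Fin n, (d (s i) : ℝ))]
    have e2 : ∀ s : Fin n → Fin k,
        (h (orbitW g (extW hk n s) n x) / ∏ i : Fin n, (d (s i) : ℝ))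
            * (μ {w : ℕ → Fin k | ∀ i : Fin n, w i = s i}).toReal
          = h (orbitW g (extW hk n s) n x) / D ^ n := by
      intro s
      rw [cyl_toReal n s]
      have hp : (∏ i : Fin n, (d (s i) : ℝ)) ≠ 0 :=
        ne_of_gt (Finset.prod_pos fun i _ => by have := hd (s i); positivity)
      rw [div_mul_div_comm, mul_comm (h (orbitW g (extW hk n s) n x)) (∏ i : Fin n, (d (s i) : ℝ)),
        mul_div_mul_left _ _ hp]
    rw [Finset.sum_congr rfl fun s _ => e2 s]
    exact (Finset.sum_div _ _ _).symm
  have integ_f : ∀ (n : ℕ) (x : X),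
      Integrable (fun w => h (orbitW g w n x) / (∏ i ∈ Finset.range n, (d (w i) : ℝ))) μ := by
    intro n x
    have e : (fun w => h (orbitW g w n x) / (∏ i ∈ Finset.range n, (d (w i) : ℝ)))
        = fun w => ∑ s : Fin n → Fin k, Set.indicator {w : ℕ → Fin k | ∀ i : Fin n, w i = s i}
            (fun _ => h (orbitW g (extW hk n s) n x) / ∏ i : Fin n, (d (s i) : ℝ)) w := by
      funext w
      rw [f_eq n x w]
      exact repr0 n (fun s : Fin n → Fin k => h (orbitW g (extW hk n s) n x) / ∏ i : Fin n, (d (s i) : ℝ)) w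
    rw [e]
    exact integrable_finset_sum _ fun s _ => (integrable_const _).indicator (cyl_meas n s)
  have key : ∀ x : X,
      Tendsto (fun n => ∫ w, h (orbitW g w n x) / (∏ i ∈ Finset.range n, (d (w i) : ℝ)) ∂μ)
        atTop (nhds (∫ w, H w x ∂μ)) := by
    intro x
    refine tendsto_integral_of_dominated_convergence (fun _ => |h x| + 2 * c)
      (fun n => (integ_f n x).aestronglyMeasurable) (integrable_const _)
      (fun n => ae_of_all _ fun w => ?_) (ae_of_all _ fun w => hH w x)
    have hab := approx_bound d hd h g c hc hb w x n
    have habs := abs_sub_abs_le_abs_sub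
      (h (orbitW g w n x) / (∏ i ∈ Finset.range n, (d (w i) : ℝ))) (h x)
    rw [Real.norm_eq_abs]
    linarith
  have Srec : ∀ (n : ℕ) (x : X),
      (∑ s : Fin (n+1) → Fin k, h (orbitW g (extW hk (n+1) s) (n+1) x))
        = ∑ j : Fin k, ∑ t : Fin n → Fin k, h (orbitW g (extW hk n t) n (g j x)) := by
    intro n x
    calc (∑ s : Fin (n+1) → Fin k, h (orbitW g (extW hk (n+1) s) (n+1) x))
        = ∑ p : Fin k × (Fin n → Fin k),
            h (orbitW g (extW hk (n+1) (Fin.cons p.1 p.2)) (n+1) x) :=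
          (Equiv.sum_comp (Fin.consEquiv (fun _ : Fin (n+1) => Fin k))
            (fun s => h (orbitW g (extW hk (n+1) s) (n+1) x))).symm
      _ = ∑ j : Fin k, ∑ t : Fin n → Fin k,
            h (orbitW g (extW hk (n+1) (Fin.cons j t)) (n+1) x) := Fintype.sum_prod_type _
      _ = ∑ j : Fin k, ∑ t : Fin n → Fin k, h (orbitW g (extW hk n t) n (g j x)) := by
          refine Finset.sum_congr rfl fun j _ => Finset.sum_congr rfl fun t _ => ?_
          congr 1
          rw [orbitW_succ_left]
          have h0 : extW hk (n+1) (Fin.cons j t) 0 = j := by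
            simp only [extW]
            rw [dif_pos (Nat.succ_pos n), Fin.mk_zero, Fin.cons_zero]
          rw [h0]
          apply orbitW_congr
          intro i hi
          show extW hk (n+1) (Fin.cons j t) (i+1) = extW hk n t i
          simp only [extW, dif_pos (Nat.succ_lt_succ hi), dif_pos hi]
          exact Fin.cons_succ (α := fun _ : Fin (n+1) => Fin k) j t ⟨i, hi⟩
  have Irec : ∀ (n : ℕ) (x : X),
      (∑ j : Fin k, ∫ w, h (orbitW g w n (g j x)) / (∏ i ∈ Finset.range n, (d (w i) : ℝ)) ∂μ)
        = D * ∫ w, h (orbitW g w (n+1) x) / (∏ i ∈ Finset.range (n+1), (d (w i) : ℝ)) ∂μ := by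
    intro n x
    rw [I_eq (n+1) x, Srec n x]
    rw [Finset.sum_congr rfl fun j _ => I_eq n (g j x), ← Finset.sum_div]
    rw [pow_succ]
    have hD0 : D ≠ 0 := ne_of_gt hDpos
    field_simp
  intro x
  constructor
  · have t1 : Tendsto (fun n => ∑ j : Fin k,
        ∫ w, h (orbitW g w n (g j x)) / (∏ i ∈ Finset.range n, (d (w i) : ℝ)) ∂μ)
        atTop (nhds (∑ j : Fin k, ∫ w, H w (g j x) ∂μ)) :=
      tendsto_finset_sum _ fun j _ => key (g j x)
    have t2 : Tendsto (fun n =>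
        D * ∫ w, h (orbitW g w (n+1) x) / (∏ i ∈ Finset.range (n+1), (d (w i) : ℝ)) ∂μ)
        atTop (nhds (D * ∫ w, H w x ∂μ)) :=
      ((key x).comp (tendsto_add_atTop_nat 1)).const_mul D
    have heq : (fun n => ∑ j : Fin k,
        ∫ w, h (orbitW g w n (g j x)) / (∏ i ∈ Finset.range n, (d (w i) : ℝ)) ∂μ)
        = fun n =>
          D * ∫ w, h (orbitW g w (n+1) x) / (∏ i ∈ Finset.range (n+1), (d (w i) : ℝ)) ∂μ :=
      funext fun n => Irec n x
    rw [heq] at t1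
    exact tendsto_nhds_unique t1 t2
  · have hb2 : ∀ n : ℕ,
        |(∫ w, h (orbitW g w n x) / (∏ i ∈ Finset.range n, (d (w i) : ℝ)) ∂μ) - h x| ≤ 2 * c := by
      intro n
      have e : (∫ w, h (orbitW g w n x) / (∏ i ∈ Finset.range n, (d (w i) : ℝ)) ∂μ) - h x
          = ∫ w, (h (orbitW g w n x) / (∏ i ∈ Finset.range n, (d (w i) : ℝ)) - h x) ∂μ := by
        rw [integral_sub (integ_f n x) (integrable_const _), integral_const]
        simp
      rw [e, ← Real.norm_eq_abs]
      calc ‖∫ w, (h (orbitW g w n x) / (∏ i ∈ Finset.range n, (d (w i) : ℝ)) - h x) ∂μ‖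
          ≤ (2 * c) * (μ Set.univ).toReal :=
            norm_integral_le_of_norm_le_const (ae_of_all _ fun w => by
              rw [Real.norm_eq_abs]; exact approx_bound d hd h g c hc hb w x n)
        _ = 2 * c := by simp
    have t3 : Tendsto (fun n =>
        |(∫ w, h (orbitW g w n x) / (∏ i ∈ Finset.range n, (d (w i) : ℝ)) ∂μ) - h x|)
        atTop (nhds |(∫ w, H w x ∂μ) - h x|) :=
      ((key x).sub tendsto_const_nhds).abs
    exact le_of_tendsto t3 (Eventually.of_forall hb2)
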